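/- The star of the vertex 0, namely S = ⋃_{σ ∈ S_p} convexHull{v_0^σ, v_1^σ, …, v_{p−1}^σ}, equals {x ∈ [0,1]^p : x_i = 0 for some i}; the star of the opposite vertex (1,…,1), namely S* = ⋃_{σ ∈ S_p} convexHull{v_1^σ, …, v_p^σ}, equals {x ∈ [0,1]^p : x_i = 1 for some i}; and S ∪ S* equals the topological frontier of [0,1]^p in ℝ^p. -/
import Mathlib


open Set

/-- The vertex `v_k^σ = e_{σ(1)} + ⋯ + e_{σ(k)}` of the simplex `K_σ`
(0-indexed: the sum of `e_{σ(i)}` over the first `k` indices `i`). -/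
def cubeVtx (p : ℕ) (σ : Equiv.Perm (Fin p)) (k : ℕ) : Fin p → ℝ :=
  ∑ i ∈ Finset.univ.filter fun i : Fin p => (i : ℕ) < k, Pi.single (σ i) 1

/-- The simplex `K_σ`, the convex hull of the `p+1` points `v_0^σ, …, v_p^σ`. -/
def Ksimp (p : ℕ) (σ : Equiv.Perm (Fin p)) : Set (Fin p → ℝ) :=
  convexHull ℝ {x | ∃ k ≤ p, x = cubeVtx p σ k}

/-- The unit cube `[0,1]^p`. -/
def unitCube (p : ℕ) : Set (Fin p → ℝ) :=
  {x | ∀ i, x i ∈ Icc (0 : ℝ) 1}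

/-- The star of the vertex `0` in the standard simplicial decomposition of the cube:
the union over `σ` of the convex hulls of `{v_0^σ, …, v_{p-1}^σ}`. -/
def starZero (p : ℕ) : Set (Fin p → ℝ) :=
  ⋃ σ : Equiv.Perm (Fin p), convexHull ℝ {x | ∃ k < p, x = cubeVtx p σ k}

/-- The star of the vertex `(1,…,1)`:
the union over `σ` of the convex hulls of `{v_1^σ, …, v_p^σ}`. -/
def starOne (p : ℕ) : Set (Fin p → ℝ) :=
  ⋃ σ : Equiv.Perm (Fin p), convexHull ℝ {x | ∃ k, 1 ≤ k ∧ k ≤ p ∧ x = cubeVtx p σ k}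



lemma cubeVtx_apply (p : ℕ) (σ : Equiv.Perm (Fin p)) (k : ℕ) (j : Fin p) :
    cubeVtx p σ k j = if ((σ.symm j : ℕ) < k) then 1 else 0 := by
  classical
  unfold cubeVtx
  rw [Finset.sum_apply]
  simp only [Pi.single_apply]
  have h2 : ∀ i : Fin p, j = σ i ↔ i = σ.symm j := by
    intro i
    constructor
    · rintro rfl; simp
    · rintro rfl; simp
  simp only [h2]
  rw [Finset.sum_ite_eq' (Finset.univ.filter fun i : Fin p => (i:ℕ) < k) (σ.symm j) (fun _ => (1:ℝ))]
  simp

section combo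
variable {p : ℕ} (x : Fin p → ℝ) (σ : Equiv.Perm (Fin p))

/-- the auxiliary "telescoping" sequence -/
noncomputable def zseq : ℕ → ℝ := fun k =>
  if k = 0 then 1 else if h : k - 1 < p then x (σ ⟨k - 1, h⟩) else 0

lemma zseq_succ (m : ℕ) :
    zseq x σ (m + 1) = if h : m < p then x (σ ⟨m, h⟩) else 0 := by
  simp [zseq]

lemma zseq_zero : zseq x σ 0 = 1 := by simp [zseq]

noncomputable def cwt : ℕ → ℝ := fun k => zseq x σ k - zseq x σ (k + 1)

lemma cwt_sum : ∑ k ∈ Finset.range (p + 1), cwt x σ k = 1 := by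
  simp only [cwt]
  rw [Finset.sum_range_sub' (zseq x σ)]
  rw [zseq_zero, zseq_succ]
  simp

lemma cwt_combo : ∑ k ∈ Finset.range (p + 1), cwt x σ k • cubeVtx p σ k = x := by
  funext j
  rw [Finset.sum_apply]
  simp only [Pi.smul_apply, cubeVtx_apply, smul_eq_mul, mul_ite, mul_one, mul_zero]
  rw [Finset.sum_ite, Finset.sum_const_zero, add_zero]
  set m : ℕ := (σ.symm j : ℕ) with hm
  have hmp : m < p := (σ.symm j).isLt
  have hfil : (Finset.range (p + 1)).filter (fun k => m < k) = Finset.Ico (m + 1) (p + 1) := by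
    ext k
    simp [Finset.mem_filter, Finset.mem_Ico, Nat.lt_succ_iff, Nat.succ_le_iff]
    tauto
  rw [hfil, Finset.sum_Ico_eq_sub _ (by omega : m + 1 ≤ p + 1)]
  simp only [cwt]
  rw [Finset.sum_range_sub' (zseq x σ), Finset.sum_range_sub' (zseq x σ)]
  have h1 : zseq x σ (p + 1) = 0 := by rw [zseq_succ]; simp
  have h2 : zseq x σ (m + 1) = x j := by
    rw [zseq_succ]
    rw [dif_pos hmp]
    congr
    simp [hm]
  rw [h1, h2]
  ring

lemma cwt_nonneg (hmono : ∀ a b : Fin p, a ≤ b → x (σ b) ≤ x (σ a))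
    (hx : ∀ i, x i ∈ Icc (0:ℝ) 1) (k : ℕ) : 0 ≤ cwt x σ k := by
  unfold cwt
  rcases Nat.eq_zero_or_pos k with rfl | hk
  · rw [zseq_zero, zseq_succ]
    split_ifs with h
    · linarith [(hx (σ ⟨0, h⟩)).2]
    · norm_num
  · obtain ⟨m, rfl⟩ := Nat.exists_eq_succ_of_ne_zero (by omega : k ≠ 0)
    rw [zseq_succ, zseq_succ]
    split_ifs with h1 h2
    · exact sub_nonneg.2 (hmono _ _ (Fin.mk_le_mk.2 (Nat.le_succ m)))
    · linarith [(hx (σ ⟨m, h1⟩)).1]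
    · omega
    · norm_num
end combo




lemma cubeVtx_mem_cube (p : ℕ) (σ : Equiv.Perm (Fin p)) (k : ℕ) :
    cubeVtx p σ k ∈ unitCube p := by
  intro i
  rw [cubeVtx_apply]
  split_ifs <;> simp

lemma convex_unitCube (p : ℕ) : Convex ℝ (unitCube p) := by
  have : unitCube p = Set.pi univ (fun _ : Fin p => Icc (0:ℝ) 1) := by
    ext x; simp [unitCube, Set.mem_pi, Pi.le_def, forall_and]
  rw [this]
  exact convex_pi fun i _ => convex_Icc 0 1

/-- antitone rearrangement: for any `x` there is `σ` with `x ∘ σ` antitone. -/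
lemma exists_antitone_perm (p : ℕ) (x : Fin p → ℝ) :
    ∃ σ : Equiv.Perm (Fin p), ∀ a b : Fin p, a ≤ b → x (σ b) ≤ x (σ a) := by
  refine ⟨(Fin.revPerm).trans (Tuple.sort x), fun a b hab => ?_⟩
  have := Tuple.monotone_sort x (Fin.rev_le_rev.2 hab)
  simpa using this

lemma mem_starZero_of (p : ℕ) (hp : 1 ≤ p) (x : Fin p → ℝ)
    (hx : x ∈ unitCube p) (i : Fin p) (hi : x i = 0) : x ∈ starZero p := by
  obtain ⟨q, rfl⟩ : ∃ q, p = q + 1 := ⟨p - 1, by omega⟩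
  obtain ⟨σ, hσ⟩ := exists_antitone_perm (q + 1) x
  have hlastmem : (q : ℕ) < q + 1 := by omega
  have hlast : x (σ ⟨q, hlastmem⟩) = 0 := by
    have hle : (σ.symm i) ≤ (⟨q, hlastmem⟩ : Fin (q + 1)) := by
      have := (σ.symm i).isLt
      rw [Fin.le_def]
      show ((σ.symm i) : ℕ) ≤ q
      omega
    have h1 : x (σ ⟨q, hlastmem⟩) ≤ x (σ (σ.symm i)) := hσ _ _ hle
    rw [Equiv.apply_symm_apply, hi] at h1
    exact le_antisymm h1 (hx _).1
  rw [starZero, mem_iUnion]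
  refine ⟨σ, ?_⟩
  have hcp : cwt x σ (q + 1) = 0 := by
    unfold cwt
    rw [zseq_succ, zseq_succ]
    rw [dif_pos hlastmem, dif_neg (by omega : ¬ (q + 1 < q + 1))]
    simpa using hlast
  have hsum : ∑ k ∈ Finset.range (q + 1), cwt x σ k = 1 := by
    have := cwt_sum x σ
    rw [Finset.sum_range_succ, hcp, add_zero] at this
    exact this
  have hcombo : ∑ k ∈ Finset.range (q + 1), cwt x σ k • cubeVtx (q + 1) σ k = x := by
    have := cwt_combo x σ
    rw [Finset.sum_range_succ, hcp, zero_smul, add_zero] at this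
    exact this
  have := Finset.centerMass_mem_convexHull (Finset.range (q + 1))
    (s := {y | ∃ k < q + 1, y = cubeVtx (q + 1) σ k})
    (w := cwt x σ) (z := fun k => cubeVtx (q + 1) σ k)
    (fun k _ => cwt_nonneg x σ hσ hx k) (by rw [hsum]; norm_num)
    (fun k hk => ⟨k, Finset.mem_range.1 hk, rfl⟩)
  rwa [Finset.centerMass_eq_of_sum_1 _ _ hsum, hcombo] at this

lemma mem_starOne_of (p : ℕ) (hp : 1 ≤ p) (x : Fin p → ℝ)
    (hx : x ∈ unitCube p) (i : Fin p) (hi : x i = 1) : x ∈ starOne p := by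
  obtain ⟨σ, hσ⟩ := exists_antitone_perm p x
  have h0mem : (0 : ℕ) < p := by omega
  have hfirst : x (σ ⟨0, h0mem⟩) = 1 := by
    have h1 : x (σ (σ.symm i)) ≤ x (σ ⟨0, h0mem⟩) := hσ _ _ (by simp [Fin.le_def])
    rw [Equiv.apply_symm_apply, hi] at h1
    exact le_antisymm (hx _).2 h1
  rw [starOne, mem_iUnion]
  refine ⟨σ, ?_⟩
  have hc0 : cwt x σ 0 = 0 := by
    unfold cwt
    rw [zseq_zero, zseq_succ, dif_pos h0mem, hfirst]
    ring
  have hsum : ∑ k ∈ Finset.range p, cwt x σ (k + 1) = 1 := by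
    have := cwt_sum x σ
    rw [Finset.sum_range_succ'] at this
    rw [hc0, add_zero] at this
    exact this
  have hcombo : ∑ k ∈ Finset.range p, cwt x σ (k + 1) • cubeVtx p σ (k + 1) = x := by
    have := cwt_combo x σ
    rw [Finset.sum_range_succ'] at this
    rw [hc0, zero_smul, add_zero] at this
    exact this
  have := Finset.centerMass_mem_convexHull (Finset.range p)
    (s := {y | ∃ k, 1 ≤ k ∧ k ≤ p ∧ y = cubeVtx p σ k})
    (w := fun k => cwt x σ (k + 1)) (z := fun k => cubeVtx p σ (k + 1))
    (fun k _ => cwt_nonneg x σ hσ hx (k + 1)) (by rw [hsum]; norm_num)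
    (fun k hk => ⟨k + 1, by omega, by exact Nat.succ_le_of_lt (Finset.mem_range.1 hk), rfl⟩)
  rwa [Finset.centerMass_eq_of_sum_1 _ _ hsum, hcombo] at this

lemma starZero_subset (p : ℕ) (hp : 1 ≤ p) :
    starZero p ⊆ {x ∈ unitCube p | ∃ i, x i = 0} := by
  rw [starZero]
  refine iUnion_subset fun σ => ?_
  have hlt : p - 1 < p := by omega
  have hsub : convexHull ℝ {x | ∃ k < p, x = cubeVtx p σ k} ⊆
      {x ∈ unitCube p | x (σ ⟨p - 1, hlt⟩) = 0} := by
    apply convexHull_min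
    · rintro y ⟨k, hk, rfl⟩
      refine ⟨cubeVtx_mem_cube p σ k, ?_⟩
      rw [cubeVtx_apply]
      rw [if_neg]
      simp only [Equiv.symm_apply_apply]
      omega
    · exact (convex_unitCube p).inter
        (convex_hyperplane (IsLinearMap.mk (fun a b => rfl) (fun c a => rfl)) 0)
  exact hsub.trans fun y hy => ⟨hy.1, _, hy.2⟩

lemma starOne_subset (p : ℕ) (hp : 1 ≤ p) :
    starOne p ⊆ {x ∈ unitCube p | ∃ i, x i = 1} := by
  rw [starOne]
  refine iUnion_subset fun σ => ?_
  have hlt : 0 < p := by omega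
  have hsub : convexHull ℝ {x | ∃ k, 1 ≤ k ∧ k ≤ p ∧ x = cubeVtx p σ k} ⊆
      {x ∈ unitCube p | x (σ ⟨0, hlt⟩) = 1} := by
    apply convexHull_min
    · rintro y ⟨k, hk1, hkp, rfl⟩
      refine ⟨cubeVtx_mem_cube p σ k, ?_⟩
      rw [cubeVtx_apply]
      rw [if_pos]
      simp only [Equiv.symm_apply_apply]
      omega
    · exact (convex_unitCube p).inter
        (convex_hyperplane (IsLinearMap.mk (fun a b => rfl) (fun c a => rfl)) 1)
  exact hsub.trans fun y hy => ⟨hy.1, _, hy.2⟩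

lemma frontier_unitCube (p : ℕ) :
    frontier (unitCube p) = {x ∈ unitCube p | ∃ i, x i = 0 ∨ x i = 1} := by
  have hcube : unitCube p = Set.pi univ (fun _ : Fin p => Icc (0:ℝ) 1) := by
    ext x; simp [unitCube, Set.mem_pi, Pi.le_def, forall_and]
  rw [frontier, hcube, closure_pi_set, interior_pi_set finite_univ]
  simp only [closure_Icc, interior_Icc]
  ext x
  simp only [mem_diff, Set.mem_pi, mem_univ, forall_true_left, mem_Icc, mem_Ioo,
    mem_setOf_eq, not_forall, unitCube, mem_Icc]
  constructor
  · rintro ⟨h1, i, h2⟩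
    refine ⟨h1, i, ?_⟩
    have := h1 i
    rcases lt_or_eq_of_le this.1 with h | h
    · right
      by_contra hne
      exact h2 ⟨h, lt_of_le_of_ne this.2 hne⟩
    · left; exact h.symm
  · rintro ⟨h1, i, h2 | h2⟩
    · exact ⟨h1, i, fun h => absurd h2 (ne_of_gt h.1)⟩
    · exact ⟨h1, i, fun h => absurd h2 (ne_of_lt h.2)⟩


/-- `S = {x ∈ [0,1]^p : some xᵢ = 0}`, `S* = {x ∈ [0,1]^p : some xᵢ = 1}`, and
`S ∪ S*` is the topological frontier of the cube. -/
theorem star_descriptions (p : ℕ) (hp : 1 ≤ p) :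
    starZero p = {x ∈ unitCube p | ∃ i, x i = 0} ∧
    starOne p = {x ∈ unitCube p | ∃ i, x i = 1} ∧
    starZero p ∪ starOne p = frontier (unitCube p) := by
  have h0 : starZero p = {x ∈ unitCube p | ∃ i, x i = 0} :=
    Subset.antisymm (starZero_subset p hp)
      (fun x ⟨hx, i, hi⟩ => mem_starZero_of p hp x hx i hi)
  have h1 : starOne p = {x ∈ unitCube p | ∃ i, x i = 1} :=
    Subset.antisymm (starOne_subset p hp)
      (fun x ⟨hx, i, hi⟩ => mem_starOne_of p hp x hx i hi)
  refine ⟨h0, h1, ?_⟩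
  rw [h0, h1, frontier_unitCube]
  ext x
  simp only [mem_union, mem_setOf_eq]
  constructor
  · rintro (⟨hx, i, hi⟩ | ⟨hx, i, hi⟩)
    · exact ⟨hx, i, Or.inl hi⟩
    · exact ⟨hx, i, Or.inr hi⟩
  · rintro ⟨hx, i, hi | hi⟩
    · exact Or.inl ⟨hx, i, hi⟩
    · exact Or.inr ⟨hx, i, hi⟩
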